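/- If ord_{p^i}(a) = d with d even, and ord_{p^(i+1)}(a) = p·d, then for every r with 1 ≤ r ≤ m there exists an integer t with a^t ≡ -1 (mod p^r). -/

import Mathlib

/-- If `ord_{p^k}(a) = d` for `1 ≤ k ≤ i` with `d` even, and `ord_{p^(i+1)}(a) = p*d`,
then for every `1 ≤ r ≤ m` there exists `t` with `a^t ≡ -1 (mod p^r)`. -/
theorem neg_one_is_power_mod_prime_pow (p : ℕ) (hp : p.Prime) (hpodd : Odd p)
    (i m : ℕ) (hi : 1 ≤ i) (hm : 1 ≤ m) (a : ℤ) (ha : IsCoprime a (p : ℤ)) (d : ℕ)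
    (hdeven : Even d)
    (hd : ∀ k, 1 ≤ k → k ≤ i → orderOf ((a : ZMod (p ^ k))) = d)
    (hd' : orderOf ((a : ZMod (p ^ (i + 1)))) = p * d) :
    ∀ r, 1 ≤ r → r ≤ m → ∃ t : ℕ, (a : ZMod (p ^ r)) ^ t = -1 := by
  intro r hr1 hrm
  have hp1 : 1 < p := hp.one_lt
  have hprpos : 0 < p ^ r := pow_pos hp.pos r
  haveI : NeZero (p ^ r) := ⟨hprpos.ne'⟩
  have hpZ : Prime (p : ℤ) := Nat.prime_iff_prime_int.mp hp
  -- a is a unit mod p^r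
  have hcop : IsCoprime a ((p : ℤ) ^ r) := ha.pow_right
  obtain ⟨u, v, huv⟩ := hcop
  have hunit : IsUnit ((a : ZMod (p ^ r))) := by
    refine IsUnit.of_mul_eq_one ((u : ZMod (p ^ r))) ?_
    have := congrArg (fun z : ℤ => (z : ZMod (p ^ r))) huv
    push_cast at this
    rw [← Nat.cast_pow, ZMod.natCast_self] at this
    simp only [mul_zero, zero_mul, add_zero] at this
    rw [mul_comm]
    simpa using this
  set e := orderOf ((a : ZMod (p ^ r))) with he
  have hepos : 0 < e := by
    have h := orderOf_pos hunit.unit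
    rwa [← orderOf_units, hunit.unit_spec] at h
  -- d divides e
  have hd1 : orderOf ((a : ZMod p)) = d := by
    have := hd 1 le_rfl hi
    rwa [pow_one] at this
  have hdvd : d ∣ e := by
    rw [← hd1]
    have hmap : (ZMod.castHom (dvd_pow_self p (Nat.one_le_iff_ne_zero.mp hr1)) (ZMod p))
        ((a : ZMod (p ^ r))) = (a : ZMod p) := map_intCast _ a
    have := orderOf_map_dvd (ZMod.castHom (dvd_pow_self p (Nat.one_le_iff_ne_zero.mp hr1))
        (ZMod p)).toMonoidHom ((a : ZMod (p ^ r)))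
    simpa [hmap] using this
  obtain ⟨d', hd2⟩ := hdeven
  have h2e : 2 ∣ e := dvd_trans ⟨d', by omega⟩ hdvd
  obtain ⟨s, hse⟩ := h2e
  have hspos : 0 < s := by omega
  have hslt : s < e := by omega
  -- a^s ≠ 1 mod p^r but (a^s)^2 = 1
  have hx_ne : ((a : ZMod (p ^ r))) ^ s ≠ 1 := by
    intro hcontra
    have := orderOf_le_of_pow_eq_one hspos hcontra
    omega
  have hx_sq : (((a : ZMod (p ^ r))) ^ s) ^ 2 = 1 := by
    rw [← pow_mul, mul_comm, ← hse]
    exact pow_orderOf_eq_one _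
  -- translate to integer divisibility
  have hdvd2 : ((p : ℤ) ^ r) ∣ (a ^ s - 1) * (a ^ s + 1) := by
    have : (((a ^ s - 1) * (a ^ s + 1) : ℤ) : ZMod (p ^ r)) = 0 := by
      push_cast
      ring_nf
      have : ((a : ZMod (p ^ r))) ^ (s * 2) = 1 := by
        rw [pow_mul]; exact hx_sq
      rw [this]; ring
    have h0 := (ZMod.intCast_zmod_eq_zero_iff_dvd _ _).mp this
    exact_mod_cast h0
  have hnotdvd : ¬ ((p : ℤ) ^ r ∣ a ^ s - 1) := by
    intro hcontra
    apply hx_ne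
    have : (((a ^ s - 1 : ℤ)) : ZMod (p ^ r)) = 0 := by
      rw [ZMod.intCast_zmod_eq_zero_iff_dvd]
      exact_mod_cast hcontra
    push_cast at this
    linear_combination this
  -- conclude p^r ∣ a^s + 1
  have hfinal : ((p : ℤ) ^ r) ∣ a ^ s + 1 := by
    by_cases hA : (p : ℤ) ∣ a ^ s - 1
    · exfalso
      have hB : ¬ (p : ℤ) ∣ a ^ s + 1 := by
        intro hB
        have h2 : (p : ℤ) ∣ 2 := by
          have := dvd_sub hB hA
          simpa using this
        have : (p : ℤ) ∣ (2 : ℤ) → (p : ℕ) ∣ 2 := by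
          intro h; exact_mod_cast Int.natCast_dvd_natCast.mp (by exact_mod_cast h)
        have hp2 : p ∣ 2 := this h2
        have hle := Nat.le_of_dvd (by norm_num) hp2
        have := Nat.odd_iff.mp hpodd
        omega
      have hcopB : IsCoprime ((p : ℤ) ^ r) (a ^ s + 1) :=
        ((hpZ.coprime_iff_not_dvd).mpr hB).pow_left
      exact hnotdvd (hcopB.dvd_of_dvd_mul_right hdvd2)
    · have hcopA : IsCoprime ((p : ℤ) ^ r) (a ^ s - 1) :=
        ((hpZ.coprime_iff_not_dvd).mpr hA).pow_left
      exact hcopA.dvd_of_dvd_mul_left hdvd2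
  refine ⟨s, ?_⟩
  have : (((a ^ s + 1 : ℤ)) : ZMod (p ^ r)) = 0 := by
    rw [ZMod.intCast_zmod_eq_zero_iff_dvd]
    exact_mod_cast hfinal
  push_cast at this
  linear_combination this
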